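/- arXiv:1303.4753 — 3 statements merged into one kernel-verified Lean document; each statement's English description precedes it below -/
import Mathlib

section
/- Let H be a complex Hilbert space, let T be a bounded self-adjoint operator on H with T ≥ c·1 for some c > 0, and let S be a bounded self-adjoint operator such that |⟨x, Sx⟩| ≤ a⟨x, Tx⟩ for all x ∈ H, where 0 ≤ a < 1. Set L := T^{−1/2} S T^{−1/2}. Then T + S is invertible and ‖(T + S)⁻¹ − T⁻¹‖ ≤ ‖T⁻¹‖·‖L‖/(1 − ‖L‖) ≤ ‖T⁻¹‖·a/(1 − a). -/
open scoped ComplexConjugate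

lemma aux_norm_le {H : Type*} [NormedAddCommGroup H] [InnerProductSpace ℂ H] [CompleteSpace H]
    (A : H →L[ℂ] H) (hA : IsSelfAdjoint A) (M : ℝ) (hM : 0 ≤ M)
    (h : ∀ x : H, |(inner ℂ x (A x) : ℂ).re| ≤ M * ‖x‖ ^ 2) : ‖A‖ ≤ M := by
  have hsym := hA.isSymmetric
  have key : ∀ x y : H, (inner ℂ x (A y) : ℂ).re ≤ M / 2 * (‖x‖ ^ 2 + ‖y‖ ^ 2) := by
    intro x y
    have e2 : (inner ℂ y (A x) : ℂ) = conj (inner ℂ x (A y) : ℂ) := by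
      exact (inner_conj_symm y (A x)).symm.trans (congrArg (starRingEnd ℂ) (hsym x y))
    have e1 : (inner ℂ (x + y) (A (x + y)) : ℂ) - inner ℂ (x - y) (A (x - y))
        = 2 * ((inner ℂ x (A y) : ℂ) + conj (inner ℂ x (A y) : ℂ)) := by
      rw [← e2]
      simp only [map_add, map_sub, inner_add_left, inner_add_right, inner_sub_left,
        inner_sub_right]
      ring
    have e3 : (inner ℂ (x + y) (A (x + y)) : ℂ).re - (inner ℂ (x - y) (A (x - y)) : ℂ).re
        = 4 * (inner ℂ x (A y) : ℂ).re := by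
      rw [← Complex.sub_re, e1, Complex.add_conj]
      simp
      ring
    have h1 := h (x + y)
    have h2 := h (x - y)
    have hp := parallelogram_law_with_norm ℂ x y
    have hb1 : (inner ℂ (x + y) (A (x + y)) : ℂ).re ≤ M * ‖x + y‖ ^ 2 :=
      (le_abs_self _).trans h1
    have hb2 : -(M * ‖x - y‖ ^ 2) ≤ (inner ℂ (x - y) (A (x - y)) : ℂ).re :=
      neg_le_of_abs_le h2
    nlinarith [sq_nonneg (‖x + y‖), sq_nonneg (‖x - y‖)]
  refine A.opNorm_le_bound hM fun x => ?_
  by_cases hx : A x = 0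
  · simp [hx]; positivity
  have hxn : x ≠ 0 := by rintro rfl; simp at hx
  have hAx : (0:ℝ) < ‖A x‖ := norm_pos_iff.mpr hx
  have hxp : (0:ℝ) < ‖x‖ := norm_pos_iff.mpr hxn
  set t : ℝ := ‖x‖ / ‖A x‖ with ht
  have htpos : 0 < t := div_pos hxp hAx
  have := key ((t : ℂ) • A x) x
  have hL : (inner ℂ ((t : ℂ) • A x) (A x) : ℂ).re = t * ‖A x‖ ^ 2 := by
    rw [inner_smul_left, Complex.conj_ofReal, Complex.re_ofReal_mul]
    congr 1
    exact inner_self_eq_norm_sq (𝕜 := ℂ) (A x)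
  have hnorm : ‖(t : ℂ) • A x‖ = t * ‖A x‖ := by
    rw [norm_smul]
    simp [abs_of_pos htpos]
  rw [hL, hnorm] at this
  have htA : t * ‖A x‖ = ‖x‖ := by rw [ht, div_mul_cancel₀ _ hAx.ne']
  -- this : t * ‖A x‖^2 ≤ M/2 * ((t*‖A x‖)^2 + ‖x‖^2)
  have h5 : ‖x‖ * ‖A x‖ ≤ M * ‖x‖ ^ 2 := by
    have e : t * ‖A x‖ ^ 2 = ‖x‖ * ‖A x‖ := by rw [sq, ← mul_assoc, htA]
    rw [e, htA] at this
    nlinarith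
  calc ‖A x‖ = (‖x‖ * ‖A x‖) / ‖x‖ := by field_simp
  _ ≤ (M * ‖x‖ ^ 2) / ‖x‖ := by gcongr
  _ = M * ‖x‖ := by field_simp [sq]


/-- **Lemma (form-bounded perturbation, resolvent estimate).** Let `T` be a bounded
self-adjoint operator on a complex Hilbert space with `T ≥ c·1` for some `c > 0`, let
`R = T^{1/2}` be its (unique) positive square root, and let `S` be a bounded self-adjoint
operator with `|⟨x, Sx⟩| ≤ a ⟨x, Tx⟩` for all `x`, where `0 ≤ a < 1`.  With
`L := T^{-1/2} S T^{-1/2}`, the operator `T + S` is invertible and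
`‖(T + S)⁻¹ - T⁻¹‖ ≤ ‖T⁻¹‖ ‖L‖ / (1 - ‖L‖) ≤ ‖T⁻¹‖ a / (1 - a)`. -/
theorem inverse_add_sub_inverse_norm_le
    {H : Type*} [NormedAddCommGroup H] [InnerProductSpace ℂ H] [CompleteSpace H]
    (T S R : H →L[ℂ] H) (c a : ℝ) (hc : 0 < c) (ha₀ : 0 ≤ a) (ha₁ : a < 1)
    (hT : IsSelfAdjoint T) (hS : IsSelfAdjoint S)
    (hTc : ∀ x : H, c * ‖x‖ ^ 2 ≤ (inner ℂ x (T x) : ℂ).re)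
    -- `R` is the unique positive square root `T^{1/2}` of `T`:
    (hR : IsSelfAdjoint R) (hRpos : ∀ x : H, 0 ≤ (inner ℂ x (R x) : ℂ).re)
    (hRsq : R ∘L R = T)
    (hSa : ∀ x : H, |(inner ℂ x (S x) : ℂ).re| ≤ a * (inner ℂ x (T x) : ℂ).re) :
    IsUnit (T + S) ∧
      ‖Ring.inverse (T + S) - Ring.inverse T‖ ≤
        ‖Ring.inverse T‖ * ‖Ring.inverse R ∘L S ∘L Ring.inverse R‖ /
          (1 - ‖Ring.inverse R ∘L S ∘L Ring.inverse R‖) ∧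
      ‖Ring.inverse T‖ * ‖Ring.inverse R ∘L S ∘L Ring.inverse R‖ /
          (1 - ‖Ring.inverse R ∘L S ∘L Ring.inverse R‖) ≤
        ‖Ring.inverse T‖ * a / (1 - a) := by
  --
  have hRR : R * R = T := hRsq
  -- T is a unit
  have hTunit : IsUnit T := by
    refine ContinuousLinearMap.isUnit_of_forall_le_norm_inner_map T (c := ⟨c, hc.le⟩) (by exact_mod_cast hc)
      fun x => ?_
    calc ‖x‖ ^ 2 * ((⟨c, hc.le⟩ : NNReal) : ℝ) = c * ‖x‖ ^ 2 := by push_cast; ring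
    _ ≤ (inner ℂ x (T x) : ℂ).re := hTc x
    _ ≤ ‖(inner ℂ x (T x) : ℂ)‖ := Complex.re_le_norm _
    _ = ‖(inner ℂ (T x) x : ℂ)‖ := norm_inner_symm x (T x)
  -- R is a unit
  have hRunit : IsUnit R := by
    obtain ⟨u, hu⟩ := hTunit
    have hcT : Commute R T := by rw [← hRR]; exact (Commute.refl R).mul_right (Commute.refl R)
    have hcu : Commute R (↑u : H →L[ℂ] H) := by rw [hu]; exact hcT
    refine ⟨⟨R, R * ↑u⁻¹, ?_, ?_⟩, rfl⟩
    · rw [← mul_assoc, hRR, ← hu, Units.mul_inv]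
    · calc R * ↑u⁻¹ * R = R * (↑u⁻¹ * R) := mul_assoc _ _ _
      _ = R * (R * ↑u⁻¹) := by rw [← hcu.units_inv_right.eq]
      _ = R * R * ↑u⁻¹ := (mul_assoc _ _ _).symm
      _ = 1 := by rw [hRR, ← hu, Units.mul_inv]
  obtain ⟨uR, huR⟩ := hRunit
  have hRunit : IsUnit R := ⟨uR, huR⟩
  have hiR_eq : Ring.inverse R = (↑uR⁻¹ : H →L[ℂ] H) := by rw [← huR, Ring.inverse_unit]
  have hRiR : R * Ring.inverse R = 1 := Ring.mul_inverse_cancel R hRunit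
  have hiRR : Ring.inverse R * R = 1 := Ring.inverse_mul_cancel R hRunit
  have hiRsa : IsSelfAdjoint (Ring.inverse R) := by
    have h1 : Ring.inverse (star R) = star (Ring.inverse R) := Ring.inverse_star R
    rw [hR.star_eq] at h1
    exact h1.symm
  set L : H →L[ℂ] H := Ring.inverse R ∘L S ∘L Ring.inverse R with hLdef
  have hLmul : L = Ring.inverse R * (S * Ring.inverse R) := rfl
  have hLsa : IsSelfAdjoint L := by
    show star L = L
    rw [hLmul, star_mul, star_mul, hiRsa.star_eq, hS.star_eq, mul_assoc]
  -- norm bound on L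
  have hLnorm : ‖L‖ ≤ a := by
    refine aux_norm_le L hLsa a ha₀ fun y => ?_
    set z : H := Ring.inverse R y with hz
    have hLy : L y = Ring.inverse R (S z) := rfl
    have h1 : (inner ℂ y (L y) : ℂ) = inner ℂ z (S z) := by
      rw [hLy]; exact (hiRsa.isSymmetric y (S z)).symm
    have hRz : R z = y := by
      have h2 := DFunLike.congr_fun hRiR y
      simpa [ContinuousLinearMap.mul_apply] using h2
    have hTz : (inner ℂ z (T z) : ℂ).re = ‖y‖ ^ 2 := by
      have h3 : T z = R (R z) := by rw [← hRsq]; rfl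
      have h5 : (inner ℂ z (T z) : ℂ) = inner ℂ (R z) (R z) := by
        rw [h3]; exact (hR.isSymmetric z (R z)).symm
      rw [h5, hRz]
      exact inner_self_eq_norm_sq (𝕜 := ℂ) y
    calc |(inner ℂ y (L y) : ℂ).re| = |(inner ℂ z (S z) : ℂ).re| := by rw [h1]
    _ ≤ a * (inner ℂ z (T z) : ℂ).re := hSa z
    _ = a * ‖y‖ ^ 2 := by rw [hTz]
  have hL1 : ‖L‖ < 1 := lt_of_le_of_lt hLnorm ha₁
  have hnegL : ‖-L‖ < 1 := by rwa [norm_neg]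
  set uE : (H →L[ℂ] H)ˣ := Units.oneSub (-L) hnegL with huEdef
  have huE : (↑uE : H →L[ℂ] H) = 1 + L := by
    rw [huEdef, Units.val_oneSub, sub_neg_eq_add]
  -- factorization T + S = R (1 + L) R
  have hSfac : R * L * R = S := by
    calc R * L * R = R * (Ring.inverse R * (S * (Ring.inverse R * R))) := by
          rw [hLmul]; simp only [mul_assoc]
    _ = S := by rw [hiRR, mul_one, ← mul_assoc, hRiR, one_mul]
  have hTS : T + S = ↑(uR * uE * uR) := by
    rw [Units.val_mul, Units.val_mul, huE, huR, mul_add, mul_one, add_mul, hRR, hSfac]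
  have hTSunit : IsUnit (T + S) := by rw [hTS]; exact (uR * uE * uR).isUnit
  refine ⟨hTSunit, ?_, ?_⟩
  · -- main estimate
    have hinvTS : Ring.inverse (T + S) =
        (↑uR⁻¹ : H →L[ℂ] H) * (↑uE⁻¹ * ↑uR⁻¹) := by
      rw [hTS, Ring.inverse_unit]
      simp [mul_inv_rev, mul_assoc]
    have hinvT : Ring.inverse T = (↑uR⁻¹ : H →L[ℂ] H) * ↑uR⁻¹ := by
      rw [← hRR, ← huR, ← Units.val_mul, Ring.inverse_unit, mul_inv_rev, Units.val_mul]
    have hdiff : Ring.inverse (T + S) - Ring.inverse T =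
        (↑uR⁻¹ : H →L[ℂ] H) * (((↑uE⁻¹ : H →L[ℂ] H) - 1) * ↑uR⁻¹) := by
      rw [hinvTS, hinvT]; noncomm_ring
    have hiT : ‖Ring.inverse T‖ = ‖Ring.inverse R‖ * ‖Ring.inverse R‖ := by
      calc ‖Ring.inverse T‖ = ‖star (Ring.inverse R) * Ring.inverse R‖ := by
            rw [hinvT, ← hiR_eq, hiRsa.star_eq]
      _ = ‖Ring.inverse R‖ * ‖Ring.inverse R‖ := CStarRing.norm_star_mul_self
    -- geometric series bound
    have hE : ‖(↑uE⁻¹ : H →L[ℂ] H) - 1‖ ≤ ‖L‖ / (1 - ‖L‖) := by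
      have hsum : Summable fun n : ℕ => (-L) ^ n := summable_geometric_of_norm_lt_one hnegL
      have hval : (↑uE⁻¹ : H →L[ℂ] H) = ∑' n : ℕ, (-L) ^ n := rfl
      rw [hval, Summable.tsum_eq_zero_add hsum]
      simp only [pow_zero, add_sub_cancel_left]
      have hb : ∀ n : ℕ, ‖(-L) ^ (n + 1)‖ ≤ ‖L‖ * ‖L‖ ^ n := fun n => by
        calc ‖(-L) ^ (n + 1)‖ ≤ ‖-L‖ ^ (n + 1) := norm_pow_le' _ n.succ_pos
        _ = ‖L‖ * ‖L‖ ^ n := by rw [norm_neg, pow_succ]; ring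
      have hg : HasSum (fun n : ℕ => ‖L‖ * ‖L‖ ^ n) (‖L‖ * (1 - ‖L‖)⁻¹) :=
        (hasSum_geometric_of_lt_one (norm_nonneg L) hL1).mul_left _
      rw [div_eq_mul_inv]
      exact tsum_of_norm_bounded hg hb
    have h1mL : (0:ℝ) < 1 - ‖L‖ := by linarith
    calc ‖Ring.inverse (T + S) - Ring.inverse T‖
        ≤ ‖(↑uR⁻¹ : H →L[ℂ] H)‖ * (‖(↑uE⁻¹ : H →L[ℂ] H) - 1‖ * ‖(↑uR⁻¹ : H →L[ℂ] H)‖) := by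
          rw [hdiff]
          exact (norm_mul_le _ _).trans
            (mul_le_mul_of_nonneg_left (norm_mul_le _ _) (norm_nonneg _))
    _ = ‖Ring.inverse T‖ * ‖(↑uE⁻¹ : H →L[ℂ] H) - 1‖ := by rw [hiT, hiR_eq]; ring
    _ ≤ ‖Ring.inverse T‖ * (‖L‖ / (1 - ‖L‖)) :=
          mul_le_mul_of_nonneg_left hE (norm_nonneg _)
    _ = ‖Ring.inverse T‖ * ‖L‖ / (1 - ‖L‖) := by ring
  · -- monotonicity step
    have h1mL : (0:ℝ) < 1 - ‖L‖ := by linarith [lt_of_le_of_lt hLnorm ha₁]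
    have h1ma : (0:ℝ) < 1 - a := by linarith
    rw [div_le_div_iff₀ h1mL h1ma]
    have hLn : (0:ℝ) ≤ ‖L‖ := norm_nonneg L
    nlinarith [norm_nonneg (Ring.inverse T)]
end

section
/- Let H be a complex Hilbert space, let c > 0, and let A, B, C, D be bounded self-adjoint operators on H with c·1 ≤ A ≤ B ≤ C and c·1 ≤ D. Then A, B, C, D are all invertible and ‖B⁻¹ − D⁻¹‖ ≤ max{‖A⁻¹ − D⁻¹‖, ‖C⁻¹ − D⁻¹‖}. -/
open ContinuousLinearMap in
/-- In a unital C⋆-algebra, a self-adjoint element sandwiched between two self-adjoint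
elements has norm bounded by the max of their norms. -/
lemma norm_le_max_of_le_of_le {𝔄 : Type*} [CStarAlgebra 𝔄] [PartialOrder 𝔄]
    [StarOrderedRing 𝔄] {x y z : 𝔄}
    (hy : IsSelfAdjoint y) (hz : IsSelfAdjoint z) (hyx : y ≤ x) (hxz : x ≤ z) :
    ‖x‖ ≤ max ‖y‖ ‖z‖ := by
  obtain (h | h) := subsingleton_or_nontrivial 𝔄
  · simp [Subsingleton.elim x 0]
  have hx : IsSelfAdjoint x := by
    have h1 : IsSelfAdjoint (x - y) := .of_nonneg (sub_nonneg.mpr hyx)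
    simpa using h1.add hy
  have hz' : x ≤ algebraMap ℝ 𝔄 ‖z‖ := hxz.trans hz.le_algebraMap_norm_self
  have hy' : -(algebraMap ℝ 𝔄 ‖y‖) ≤ x := hy.neg_algebraMap_norm_le_self.trans hyx
  obtain (hs | hs) := CStarAlgebra.norm_or_neg_norm_mem_spectrum hx
  · exact le_max_of_le_right <| (le_algebraMap_iff_spectrum_le (a := x) (r := ‖z‖) hx).mp hz' _ hs
  · refine le_max_of_le_left ?_
    have := algebraMap_le_iff_le_spectrum (a := x) (r := -‖y‖) hx |>.mp (by simpa using hy') _ hs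
    linarith

/-- **Sandwich estimate for resolvents.** Let `A, B, C, D` be bounded self-adjoint operators
on a complex Hilbert space with `c·1 ≤ A ≤ B ≤ C` and `c·1 ≤ D` for some `c > 0` (with
`A ≤ B` meaning `⟨x, (B - A)x⟩ ≥ 0` for all `x`).  Then `A, B, C, D` are invertible and
`‖B⁻¹ - D⁻¹‖ ≤ max {‖A⁻¹ - D⁻¹‖, ‖C⁻¹ - D⁻¹‖}`. -/
theorem inverse_sandwich_estimate
    {H : Type*} [NormedAddCommGroup H] [InnerProductSpace ℂ H] [CompleteSpace H]
    (A B C D : H →L[ℂ] H) (c : ℝ) (hc : 0 < c)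
    (hA : IsSelfAdjoint A) (hB : IsSelfAdjoint B) (hC : IsSelfAdjoint C)
    (hD : IsSelfAdjoint D)
    (hcA : ∀ x : H, c * ‖x‖ ^ 2 ≤ (inner ℂ x (A x) : ℂ).re)
    (hAB : ∀ x : H, 0 ≤ (inner ℂ x ((B - A) x) : ℂ).re)
    (hBC : ∀ x : H, 0 ≤ (inner ℂ x ((C - B) x) : ℂ).re)
    (hcD : ∀ x : H, c * ‖x‖ ^ 2 ≤ (inner ℂ x (D x) : ℂ).re) :
    IsUnit A ∧ IsUnit B ∧ IsUnit C ∧ IsUnit D ∧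
      ‖Ring.inverse B - Ring.inverse D‖ ≤
        max ‖Ring.inverse A - Ring.inverse D‖ ‖Ring.inverse C - Ring.inverse D‖ := by
  -- coercivity of `B` and `C`
  have hcB : ∀ x : H, c * ‖x‖ ^ 2 ≤ (inner ℂ x (B x) : ℂ).re := fun x => by
    have h1 := hAB x
    simp only [ContinuousLinearMap.sub_apply, inner_sub_right, Complex.sub_re] at h1
    linarith [hcA x]
  have hcC : ∀ x : H, c * ‖x‖ ^ 2 ≤ (inner ℂ x (C x) : ℂ).re := fun x => by
    have h1 := hBC x
    simp only [ContinuousLinearMap.sub_apply, inner_sub_right, Complex.sub_re] at h1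
    linarith [hcB x]
  -- invertibility from coercivity
  have key : ∀ (T : H →L[ℂ] H), (∀ x : H, c * ‖x‖ ^ 2 ≤ (inner ℂ x (T x) : ℂ).re) → IsUnit T := by
    intro T hT
    refine T.isUnit_of_forall_le_norm_inner_map (c := ⟨c, hc.le⟩) (by exact_mod_cast hc)
      fun x => ?_
    calc ‖x‖ ^ 2 * (⟨c, hc.le⟩ : NNReal) = c * ‖x‖ ^ 2 := by push_cast; ring
      _ ≤ (inner ℂ x (T x) : ℂ).re := hT x
      _ ≤ ‖(inner ℂ x (T x) : ℂ)‖ := Complex.re_le_norm _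
      _ = ‖(inner ℂ (T x) x : ℂ)‖ := norm_inner_symm _ _
  have hAu := key A hcA
  have hBu := key B hcB
  have hCu := key C hcC
  have hDu := key D hcD
  refine ⟨hAu, hBu, hCu, hDu, ?_⟩
  -- nonnegativity in the Loewner order
  have nonneg : ∀ (T : H →L[ℂ] H), IsSelfAdjoint T →
      (∀ x : H, 0 ≤ (inner ℂ x (T x) : ℂ).re) → (0 : H →L[ℂ] H) ≤ T := by
    intro T hTs hT
    rw [ContinuousLinearMap.nonneg_iff_isPositive]
    exact ⟨hTs.isSymmetric, fun x => by
      simpa [ContinuousLinearMap.reApplyInnerSelf, inner_re_symm] using hT x⟩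
  have hA0 : (0 : H →L[ℂ] H) ≤ A := nonneg A hA fun x => le_trans (by positivity) (hcA x)
  have hD0 : (0 : H →L[ℂ] H) ≤ D := nonneg D hD fun x => le_trans (by positivity) (hcD x)
  have hAB' : A ≤ B := by
    rw [ContinuousLinearMap.le_def, ← ContinuousLinearMap.nonneg_iff_isPositive]
    exact nonneg _ (hB.sub hA) hAB
  have hBC' : B ≤ C := by
    rw [ContinuousLinearMap.le_def, ← ContinuousLinearMap.nonneg_iff_isPositive]
    exact nonneg _ (hC.sub hB) hBC
  have hB0 : (0 : H →L[ℂ] H) ≤ B := hA0.trans hAB'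
  -- pass to units
  obtain ⟨uA, rfl⟩ := hAu
  obtain ⟨uB, rfl⟩ := hBu
  obtain ⟨uC, rfl⟩ := hCu
  obtain ⟨uD, rfl⟩ := hDu
  rw [Ring.inverse_unit, Ring.inverse_unit, Ring.inverse_unit, Ring.inverse_unit]
  -- inverse inequalities
  have h1 : (↑uB⁻¹ : H →L[ℂ] H) ≤ ↑uA⁻¹ := CStarAlgebra.inv_le_inv hA0 hAB'
  have h2 : (↑uC⁻¹ : H →L[ℂ] H) ≤ ↑uB⁻¹ := CStarAlgebra.inv_le_inv hB0 hBC'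
  have hDinv0 : (0 : H →L[ℂ] H) ≤ ↑uD⁻¹ := CFC.inv_nonneg_of_nonneg uD hD0
  have hCinv0 : (0 : H →L[ℂ] H) ≤ ↑uC⁻¹ := CFC.inv_nonneg_of_nonneg uC (hB0.trans hBC')
  have hAinv0 : (0 : H →L[ℂ] H) ≤ ↑uA⁻¹ := CFC.inv_nonneg_of_nonneg uA hA0
  have hsC : IsSelfAdjoint ((↑uC⁻¹ : H →L[ℂ] H) - ↑uD⁻¹) :=
    (IsSelfAdjoint.of_nonneg hCinv0).sub (IsSelfAdjoint.of_nonneg hDinv0)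
  have hsA : IsSelfAdjoint ((↑uA⁻¹ : H →L[ℂ] H) - ↑uD⁻¹) :=
    (IsSelfAdjoint.of_nonneg hAinv0).sub (IsSelfAdjoint.of_nonneg hDinv0)
  have := norm_le_max_of_le_of_le hsC hsA
    (sub_le_sub_right h2 _) (sub_le_sub_right h1 _)
  rw [max_comm] at this
  exact this
end

section
/- Let H be a complex Hilbert space, let h and H_ε be bounded self-adjoint operators on H with h ≥ 1 (i.e. ⟨x, hx⟩ ≥ ‖x‖² for all x), let c > 0 and let 0 < ε < 1/(2c). Suppose that (1 − cε)h − cε·1 ≤ H_ε ≤ (1 + cε)h + cε·1. Then h and H_ε are invertible and ‖H_ε⁻¹ − h⁻¹‖ ≤ 2cε/(1 − 2cε). -/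
set_option maxHeartbeats 1000000
set_option synthInstance.maxHeartbeats 1000000

section Aux

variable {H : Type*} [NormedAddCommGroup H] [InnerProductSpace ℂ H] [CompleteSpace H]

/-- Pointwise criterion for Loewner nonnegativity. -/
lemma aux_nonneg_of_forall {T : H →L[ℂ] H} (hSA : IsSelfAdjoint T)
    (hpos : ∀ x : H, 0 ≤ (inner ℂ x (T x) : ℂ).re) : (0 : H →L[ℂ] H) ≤ T := by
  rw [ContinuousLinearMap.nonneg_iff_isPositive, ContinuousLinearMap.isPositive_def']
  refine ⟨hSA, fun x => ?_⟩
  rw [ContinuousLinearMap.reApplyInnerSelf_apply, inner_re_symm]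
  exact hpos x

lemma aux_sa_smul {T : H →L[ℂ] H} (hT : IsSelfAdjoint T) (r : ℝ) :
    IsSelfAdjoint (r • T) := by
  rw [ContinuousLinearMap.isSelfAdjoint_iff_isSymmetric] at hT ⊢
  intro x y
  have h1 := hT x y
  simp only [ContinuousLinearMap.coe_coe, ContinuousLinearMap.smul_apply] at h1 ⊢
  rw [RCLike.real_smul_eq_coe_smul (K := ℂ), RCLike.real_smul_eq_coe_smul (K := ℂ),
    inner_smul_left, inner_smul_right, h1, RCLike.conj_ofReal]

lemma aux_smul_nonneg {T : H →L[ℂ] H} (hT : (0 : H →L[ℂ] H) ≤ T) {r : ℝ} (hr : 0 ≤ r) :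
    (0 : H →L[ℂ] H) ≤ r • T := by
  rw [ContinuousLinearMap.nonneg_iff_isPositive, ContinuousLinearMap.isPositive_def'] at hT ⊢
  refine ⟨aux_sa_smul hT.1 r, fun x => ?_⟩
  have h2 := hT.2 x
  simp only [ContinuousLinearMap.reApplyInnerSelf_apply, ContinuousLinearMap.smul_apply] at h2 ⊢
  rw [RCLike.real_smul_eq_coe_smul (K := ℂ), inner_smul_left, RCLike.conj_ofReal,
    RCLike.re_ofReal_mul]
  exact mul_nonneg hr h2

lemma aux_smul_le_smul {S T : H →L[ℂ] H} (hST : S ≤ T) {r : ℝ} (hr : 0 ≤ r) :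
    r • S ≤ r • T := by
  rw [← sub_nonneg] at hST ⊢
  rw [← smul_sub]
  exact aux_smul_nonneg hST hr

lemma aux_smul_form (r : ℝ) (S : H →L[ℂ] H) (x : H) :
    (inner ℂ x ((r • S) x) : ℂ).re = r * (inner ℂ x (S x) : ℂ).re := by
  rw [ContinuousLinearMap.smul_apply, RCLike.real_smul_eq_coe_smul (K := ℂ), inner_smul_right]
  simp [Complex.mul_re]

end Aux

/-- **Abstract norm-resolvent convergence.** Let `h` and `H_ε` be bounded self-adjoint
operators on a complex Hilbert space with `h ≥ 1` (i.e. `⟨x, hx⟩ ≥ ‖x‖²` for all `x`), let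
`c > 0` and `0 < ε < 1/(2c)`, and suppose the two-sided form comparison
`(1 - cε)h - cε·1 ≤ H_ε ≤ (1 + cε)h + cε·1` holds.  Then `h` and `H_ε` are invertible and
`‖H_ε⁻¹ - h⁻¹‖ ≤ 2cε/(1 - 2cε)`. -/
theorem norm_resolvent_estimate
    {H : Type*} [NormedAddCommGroup H] [InnerProductSpace ℂ H] [CompleteSpace H]
    (h Hε : H →L[ℂ] H) (c ε : ℝ) (hc : 0 < c) (hε : 0 < ε) (hε' : ε < 1 / (2 * c))
    (hh : IsSelfAdjoint h) (hHε : IsSelfAdjoint Hε)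
    (hh1 : ∀ x : H, ‖x‖ ^ 2 ≤ (inner ℂ x (h x) : ℂ).re)
    (hlow : ∀ x : H,
      (1 - c * ε) * (inner ℂ x (h x) : ℂ).re - c * ε * ‖x‖ ^ 2 ≤ (inner ℂ x (Hε x) : ℂ).re)
    (hupp : ∀ x : H,
      (inner ℂ x (Hε x) : ℂ).re ≤ (1 + c * ε) * (inner ℂ x (h x) : ℂ).re + c * ε * ‖x‖ ^ 2) :
    IsUnit h ∧ IsUnit Hε ∧
      ‖Ring.inverse Hε - Ring.inverse h‖ ≤ 2 * c * ε / (1 - 2 * c * ε) := by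
  have hcε : 0 < c * ε := mul_pos hc hε
  have h2 : 2 * (c * ε) < 1 := by
    rw [lt_div_iff₀ (by positivity)] at hε'
    nlinarith
  have h1m : 0 < 1 - 2 * (c * ε) := by linarith
  have h1p : 0 < 1 + 2 * (c * ε) := by linarith
  -- lower quadratic bound for `Hε`
  have hHlow : ∀ x : H, (1 - 2 * (c * ε)) * ‖x‖ ^ 2 ≤ (inner ℂ x (Hε x) : ℂ).re := by
    intro x
    have h1 := hh1 x
    have h2' := hlow x
    nlinarith [sq_nonneg ‖x‖]
  -- invertibility of `h`
  have hu : IsUnit h := by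
    refine ContinuousLinearMap.isUnit_of_forall_le_norm_inner_map h (c := 1) one_pos fun x => ?_
    calc ‖x‖ ^ 2 * ((1 : NNReal) : ℝ) = ‖x‖ ^ 2 := by simp
      _ ≤ (inner ℂ x (h x) : ℂ).re := hh1 x
      _ = (inner ℂ (h x) x : ℂ).re := by
            simpa using (inner_re_symm (𝕜 := ℂ) x (h x))
      _ ≤ ‖(inner ℂ (h x) x : ℂ)‖ := Complex.re_le_norm _
  -- invertibility of `Hε`
  have hw : IsUnit Hε := by
    refine ContinuousLinearMap.isUnit_of_forall_le_norm_inner_map Hε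
      (c := ⟨1 - 2 * (c * ε), h1m.le⟩) (by exact_mod_cast h1m) fun x => ?_
    calc ‖x‖ ^ 2 * ((⟨1 - 2 * (c * ε), h1m.le⟩ : NNReal) : ℝ)
        = (1 - 2 * (c * ε)) * ‖x‖ ^ 2 := by push_cast; ring
      _ ≤ (inner ℂ x (Hε x) : ℂ).re := hHlow x
      _ = (inner ℂ (Hε x) x : ℂ).re := by
            simpa using (inner_re_symm (𝕜 := ℂ) x (Hε x))
      _ ≤ ‖(inner ℂ (Hε x) x : ℂ)‖ := Complex.re_le_norm _
  refine ⟨hu, hw, ?_⟩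
  -- basic order facts
  have h_nonneg : (0 : H →L[ℂ] H) ≤ h :=
    aux_nonneg_of_forall hh fun x => le_trans (by positivity) (hh1 x)
  have hE_nonneg : (0 : H →L[ℂ] H) ≤ Hε :=
    aux_nonneg_of_forall hHε fun x => le_trans (by positivity) (hHlow x)
  have one_nonneg : (0 : H →L[ℂ] H) ≤ 1 :=
    aux_nonneg_of_forall (IsSelfAdjoint.one (H →L[ℂ] H)) fun x => by
      rw [ContinuousLinearMap.one_apply]
      have hxx : (inner ℂ x x : ℂ).re = ‖x‖ ^ 2 := by
        simpa using inner_self_eq_norm_sq (𝕜 := ℂ) x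
      rw [hxx]; positivity
  have hone_le : (1 : H →L[ℂ] H) ≤ h := by
    rw [← sub_nonneg]
    refine aux_nonneg_of_forall (hh.sub (IsSelfAdjoint.one (H →L[ℂ] H))) fun x => ?_
    have := hh1 x
    simp only [ContinuousLinearMap.sub_apply, ContinuousLinearMap.one_apply, inner_sub_right,
      Complex.sub_re]
    have hxx : (inner ℂ x x : ℂ).re = ‖x‖ ^ 2 := by
      simpa using inner_self_eq_norm_sq (𝕜 := ℂ) x
    rw [hxx]
    linarith
  -- two-sided comparison in the Loewner order
  have ineqL : (1 - 2 * (c * ε)) • h ≤ Hε := by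
    rw [← sub_nonneg]
    refine aux_nonneg_of_forall (hHε.sub (aux_sa_smul hh _)) fun x => ?_
    have h1 := hh1 x
    have h2' := hlow x
    rw [ContinuousLinearMap.sub_apply, inner_sub_right, Complex.sub_re, aux_smul_form]
    nlinarith
  have ineqU : Hε ≤ (1 + 2 * (c * ε)) • h := by
    rw [← sub_nonneg]
    refine aux_nonneg_of_forall ((aux_sa_smul hh _).sub hHε) fun x => ?_
    have h1 := hh1 x
    have h2' := hupp x
    rw [ContinuousLinearMap.sub_apply, inner_sub_right, Complex.sub_re, aux_smul_form]
    nlinarith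
  -- units
  have huL : IsUnit ((1 - 2 * (c * ε)) • h) := by
    rw [Algebra.smul_def]
    exact ((isUnit_iff_ne_zero.mpr h1m.ne').map (algebraMap ℝ (H →L[ℂ] H))).mul hu
  have huU : IsUnit ((1 + 2 * (c * ε)) • h) := by
    rw [Algebra.smul_def]
    exact ((isUnit_iff_ne_zero.mpr h1p.ne').map (algebraMap ℝ (H →L[ℂ] H))).mul hu
  set u := hu.unit with hu_def
  set w := hw.unit with hw_def
  set uL := huL.unit with huL_def
  set uU := huU.unit with huU_def
  -- inverses of the scaled units
  have huLinv : (↑uL⁻¹ : H →L[ℂ] H) = (1 - 2 * (c * ε))⁻¹ • ↑u⁻¹ := by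
    refine Units.inv_eq_of_mul_eq_one_right ?_
    rw [IsUnit.unit_spec, ← hu.unit_spec, smul_mul_smul_comm, ← hu_def, Units.mul_inv,
      mul_inv_cancel₀ h1m.ne', one_smul]
  have huUinv : (↑uU⁻¹ : H →L[ℂ] H) = (1 + 2 * (c * ε))⁻¹ • ↑u⁻¹ := by
    refine Units.inv_eq_of_mul_eq_one_right ?_
    rw [IsUnit.unit_spec, ← hu.unit_spec, smul_mul_smul_comm, ← hu_def, Units.mul_inv,
      mul_inv_cancel₀ h1p.ne', one_smul]
  -- inverse monotonicity
  have step1 : (↑w⁻¹ : H →L[ℂ] H) ≤ (1 - 2 * (c * ε))⁻¹ • ↑u⁻¹ := by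
    rw [← huLinv]
    refine CStarAlgebra.inv_le_inv (a := uL) ?_ ?_
    · rw [IsUnit.unit_spec]
      exact aux_smul_nonneg h_nonneg h1m.le
    · rw [IsUnit.unit_spec, IsUnit.unit_spec]
      exact ineqL
  have step2 : (1 + 2 * (c * ε))⁻¹ • (↑u⁻¹ : H →L[ℂ] H) ≤ ↑w⁻¹ := by
    rw [← huUinv]
    refine CStarAlgebra.inv_le_inv (a := w) ?_ ?_
    · rw [IsUnit.unit_spec]; exact hE_nonneg
    · rw [IsUnit.unit_spec, IsUnit.unit_spec]
      exact ineqU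
  -- properties of `h⁻¹`
  have hinv_nonneg : (0 : H →L[ℂ] H) ≤ ↑u⁻¹ :=
    CFC.inv_nonneg_of_nonneg u (by rw [hu.unit_spec]; exact h_nonneg)
  have hinv_le_one : (↑u⁻¹ : H →L[ℂ] H) ≤ 1 := by
    have := CStarAlgebra.inv_le_inv (a := (1 : (H →L[ℂ] H)ˣ)) (b := u)
      (by simpa using one_nonneg) (by rw [Units.val_one, hu.unit_spec]; exact hone_le)
    simpa using this
  -- rewrite `Ring.inverse`
  have hRh : Ring.inverse h = (↑u⁻¹ : H →L[ℂ] H) := by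
    rw [← hu.unit_spec, Ring.inverse_unit]
  have hRw : Ring.inverse Hε = (↑w⁻¹ : H →L[ℂ] H) := by
    rw [← hw.unit_spec, Ring.inverse_unit]
  set r : ℝ := 2 * c * ε / (1 - 2 * c * ε) with hr_def
  have hr_nonneg : 0 ≤ r := by
    apply div_nonneg (by positivity)
    linarith
  set s : ℝ := 2 * c * ε / (1 + 2 * c * ε) with hs_def
  have hs_nonneg : 0 ≤ s := by positivity
  have hsr : s ≤ r := by
    apply div_le_div_of_nonneg_left (by positivity) (by linarith) (by linarith)
  set T : H →L[ℂ] H := Ring.inverse Hε - Ring.inverse h with hT_def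
  -- upper bound
  have hTub : T ≤ r • 1 := by
    have hne : (1 - 2 * (c * ε)) ≠ 0 := ne_of_gt h1m
    have hne' : (1 : ℝ) - 2 * c * ε ≠ 0 := by intro hcon; rw [show (1:ℝ) - 2*c*ε = 1 - 2*(c*ε) by ring] at hcon; exact hne hcon
    have e1 : (1 - 2 * (c * ε))⁻¹ - 1 = r := by
      rw [hr_def, show (1 : ℝ) - 2 * (c * ε) = 1 - 2 * c * ε by ring,
        eq_div_iff hne', sub_mul, inv_mul_cancel₀ hne']
      ring
    calc T = ↑w⁻¹ - ↑u⁻¹ := by rw [hT_def, hRh, hRw]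
      _ ≤ (1 - 2 * (c * ε))⁻¹ • ↑u⁻¹ - ↑u⁻¹ := sub_le_sub_right step1 _
      _ = ((1 - 2 * (c * ε))⁻¹ - 1) • ↑u⁻¹ := by rw [sub_smul, one_smul]
      _ = r • ↑u⁻¹ := by rw [e1]
      _ ≤ r • 1 := aux_smul_le_smul hinv_le_one hr_nonneg
  -- lower bound
  have hTlb : (-r) • (1 : H →L[ℂ] H) ≤ T := by
    have e2 : (1 + 2 * (c * ε))⁻¹ - 1 = -s := by
      rw [hs_def]; field_simp; ring
    calc (-r) • (1 : H →L[ℂ] H) ≤ (-s) • 1 := by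
          rw [← sub_nonneg, ← sub_smul]
          exact aux_smul_nonneg one_nonneg (by linarith)
      _ ≤ (-s) • ↑u⁻¹ := by
          rw [← sub_nonneg]
          have : (-s) • (↑u⁻¹ : H →L[ℂ] H) - (-s) • 1 = s • (1 - ↑u⁻¹) := by
            module
          rw [this]
          exact aux_smul_nonneg (by rwa [← sub_nonneg] at hinv_le_one) hs_nonneg
      _ = ((1 + 2 * (c * ε))⁻¹ - 1) • ↑u⁻¹ := by rw [e2]
      _ = (1 + 2 * (c * ε))⁻¹ • ↑u⁻¹ - ↑u⁻¹ := by rw [sub_smul, one_smul]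
      _ ≤ ↑w⁻¹ - ↑u⁻¹ := sub_le_sub_right step2 _
      _ = T := by rw [hT_def, hRh, hRw]
  -- self-adjointness of T
  have hwinv_nonneg : (0 : H →L[ℂ] H) ≤ ↑w⁻¹ :=
    CFC.inv_nonneg_of_nonneg w (by rw [hw.unit_spec]; exact hE_nonneg)
  have hTsa : IsSelfAdjoint T := by
    rw [hT_def, hRh, hRw]
    exact (IsSelfAdjoint.of_nonneg hwinv_nonneg).sub (IsSelfAdjoint.of_nonneg hinv_nonneg)
  -- spectrum of T lies in [-r, r]
  have hspec : ∀ μ ∈ spectrum ℝ T, -r ≤ μ ∧ μ ≤ r := by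
    intro μ hμ
    constructor
    · -- from `0 ≤ T + r•1`
      have hpos : (0 : H →L[ℂ] H) ≤ T + algebraMap ℝ (H →L[ℂ] H) r := by
        rw [Algebra.algebraMap_eq_smul_one]
        have h' := hTlb
        rw [← sub_nonneg] at h'
        have e : T - (-r) • (1 : H →L[ℂ] H) = T + r • 1 := by module
        rw [← e]
        exact h'
      have hmem : μ + r ∈ spectrum ℝ (T + algebraMap ℝ (H →L[ℂ] H) r) := by
        rw [← spectrum.add_singleton_eq]
        exact Set.add_mem_add hμ rfl
      have := spectrum_nonneg_of_nonneg hpos hmem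
      linarith
    · -- from `T ≤ r•1`
      have hpos : (0 : H →L[ℂ] H) ≤ algebraMap ℝ (H →L[ℂ] H) r - T := by
        rw [Algebra.algebraMap_eq_smul_one, sub_nonneg]
        exact hTub
      have hmem : r - μ ∈ spectrum ℝ (algebraMap ℝ (H →L[ℂ] H) r - T) := by
        rw [← spectrum.singleton_sub_eq]
        exact Set.sub_mem_sub rfl hμ
      have := spectrum_nonneg_of_nonneg hpos hmem
      linarith
  -- conclude
  have hgoal : ‖T‖ ≤ r := by
    rcases subsingleton_or_nontrivial (H →L[ℂ] H) with hs | hnt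
    · rw [Subsingleton.elim T 0, norm_zero]; exact hr_nonneg
    · rcases CStarAlgebra.norm_or_neg_norm_mem_spectrum hTsa with hm | hm
      · exact (hspec _ hm).2
      · have := (hspec _ hm).1
        linarith
  exact hgoal
end
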